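/- Let f be an XOS function on a finite set V, let X* ⊆ V be nonempty with s := |X*|, and let m be an integer with 1 ≤ m ≤ s. Then Σ_{X ⊆ X*, |X| = m} f(X) ≥ C(s, m) · (m/s) · f(X*). (Equivalently: the expected value of f on a uniformly random m-element subset of X* is at least (m/s) · f(X*).) -/

import Mathlib

lemma card_filter_mem_powersetCard {V : Type*} [DecidableEq V] (Xstar : Finset V)
    (m : ℕ) (hm1 : 1 ≤ m) (v : V) (hv : v ∈ Xstar) :
    ((Xstar.powersetCard m).filter (fun X => v ∈ X)).card
      = (Xstar.card - 1).choose (m - 1) := by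
  rw [← Finset.card_erase_of_mem hv, ← Finset.card_powersetCard (m - 1) (Xstar.erase v)]
  apply Finset.card_nbij' (fun X => X.erase v) (fun Y => insert v Y)
  · intro X hX
    simp only [Finset.mem_coe, Finset.mem_filter, Finset.mem_powersetCard] at hX
    obtain ⟨⟨hsub, hcard⟩, hvX⟩ := hX
    simp only [Finset.mem_coe, Finset.mem_powersetCard]
    exact ⟨Finset.erase_subset_erase v hsub,
      by rw [Finset.card_erase_of_mem hvX, hcard]⟩
  · intro Y hY
    simp only [Finset.mem_coe, Finset.mem_powersetCard] at hY
    obtain ⟨hsub, hcard⟩ := hY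
    have hvY : v ∉ Y := fun h => (Finset.notMem_erase v Xstar) (hsub h)
    simp only [Finset.mem_coe, Finset.mem_filter, Finset.mem_powersetCard]
    refine ⟨⟨?_, ?_⟩, Finset.mem_insert_self v Y⟩
    · exact Finset.insert_subset hv (hsub.trans (Finset.erase_subset v Xstar))
    · rw [Finset.card_insert_of_notMem hvY, hcard, Nat.sub_add_cancel hm1]
  · intro X hX
    simp only [Finset.mem_coe, Finset.mem_filter] at hX
    exact Finset.insert_erase hX.2
  · intro Y hY
    simp only [Finset.mem_coe, Finset.mem_powersetCard] at hY
    have hvY : v ∉ Y := fun h => (Finset.notMem_erase v Xstar) (hY.1 h)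
    exact Finset.erase_insert hvY

/-- For an XOS function `f` on a finite set `V`, a nonempty `X* ⊆ V` with
`s := |X*|`, and an integer `1 ≤ m ≤ s`, the sum of `f` over all `m`-element subsets of `X*`
is at least `C(s,m) · (m/s) · f(X*)`. -/
theorem stmt3 {V : Type*} [Fintype V] [DecidableEq V] {k : ℕ}
    (w : Fin k → V → ℝ) (f : Finset V → ℝ)
    (hf : ∀ X : Finset V, IsGreatest (Set.range fun i : Fin k => ∑ v ∈ X, w i v) (f X))
    (Xstar : Finset V) (hne : Xstar.Nonempty) {s : ℕ} (hs : s = Xstar.card)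
    {m : ℕ} (hm1 : 1 ≤ m) (hms : m ≤ s) :
    (s.choose m : ℝ) * ((m : ℝ) / s) * f Xstar ≤ ∑ X ∈ Xstar.powersetCard m, f X := by
  obtain ⟨i, hi⟩ := (hf Xstar).1
  have hs1 : 1 ≤ s := le_trans hm1 hms
  -- key: LHS = C(s-1, m-1) * f Xstar
  have hkey : (s.choose m : ℝ) * ((m : ℝ) / s) = ((s - 1).choose (m - 1) : ℝ) := by
    have h := Nat.add_one_mul_choose_eq (s - 1) (m - 1)
    simp only [Nat.succ_eq_add_one, Nat.sub_add_cancel hs1, Nat.sub_add_cancel hm1] at h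
    have hspos : (0 : ℝ) < s := by exact_mod_cast hs1
    have h' : ((s : ℝ)) * ((s - 1).choose (m - 1) : ℝ) = (s.choose m : ℝ) * m := by
      exact_mod_cast congrArg (Nat.cast (R := ℝ)) h
    have hspos : (0 : ℝ) < s := by exact_mod_cast hs1
    field_simp
    linarith
  rw [hkey]
  have hstep : ∀ X ∈ Xstar.powersetCard m, (∑ v ∈ X, w i v) ≤ f X := fun X _ =>
    (hf X).2 ⟨i, rfl⟩
  calc ((s - 1).choose (m - 1) : ℝ) * f Xstar
      = ∑ X ∈ Xstar.powersetCard m, ∑ v ∈ X, w i v := by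
        rw [← hi]
        have : ∀ X ∈ Xstar.powersetCard m, (∑ v ∈ X, w i v)
            = ∑ v ∈ Xstar, if v ∈ X then w i v else 0 := by
          intro X hX
          rw [Finset.sum_ite_mem, Finset.inter_comm,
            Finset.inter_eq_left.2 (Finset.mem_powersetCard.1 hX).1]
        rw [Finset.sum_congr rfl this, Finset.sum_comm]
        rw [Finset.mul_sum]
        refine Finset.sum_congr rfl fun v hv => ?_
        rw [← Finset.sum_filter, Finset.sum_const,
          card_filter_mem_powersetCard Xstar m hm1 v hv, ← hs]
        simp [nsmul_eq_mul, mul_comm]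
    _ ≤ ∑ X ∈ Xstar.powersetCard m, f X := Finset.sum_le_sum hstep
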